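/- Let J, K : ℝ → ℝⁿ be differentiable functions, and define the vector fields X_J, X_K : ℝ × ℝ × ℝⁿ → ℝ × ℝ × ℝⁿ by X_J(u,v,x) = ( 0, ⟨x, J'(u)⟩, J(u) ) and X_K(u,v,x) = ( 0, ⟨x, K'(u)⟩, K(u) ). Then the Lie bracket of vector fields satisfies [X_J, X_K](u,v,x) = ( 0, ⟨J(u), K'(u)⟩ − ⟨K(u), J'(u)⟩, 0 ) for all (u,v,x); that is, [X_J, X_K] = ω(J,K)(u)·∂ᵥ where ω(J,K)(u) = ⟨J(u), K'(u)⟩ − ⟨K(u), J'(u)⟩. -/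

import Mathlib

open Matrix

/-- The infinitesimal Heisenberg symmetry `X_J(u,v,x) = (0, ⟨x, J'(u)⟩, J(u))` of a
Brinkmann plane wave, where `dJ` denotes the derivative `J'`. -/
def heisVF {n : ℕ} (J dJ : ℝ → (Fin n → ℝ)) :
    ℝ × ℝ × (Fin n → ℝ) → ℝ × ℝ × (Fin n → ℝ) :=
  fun q => (0, q.2.2 ⬝ᵥ dJ q.1, J q.1)

/-- The Fréchet derivative of `heisVF K dK` at `q`, applied to any vector `w` with
vanishing first component, equals `(0, ⟨w.2.2, K'(u)⟩, 0)`. -/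
lemma heisVF_fderiv_apply {n : ℕ} (K dK ddK : ℝ → (Fin n → ℝ))
    (hK : ∀ u, HasDerivAt K (dK u) u) (hdK : ∀ u, HasDerivAt dK (ddK u) u)
    (q w : ℝ × ℝ × (Fin n → ℝ)) (hw : w.1 = 0) :
    fderiv ℝ (heisVF K dK) q w = (0, w.2.2 ⬝ᵥ dK q.1, 0) := by
  have hx : ∀ i, HasFDerivAt (fun p : ℝ × ℝ × (Fin n → ℝ) => p.2.2 i)
      ((ContinuousLinearMap.proj i).comp
        ((ContinuousLinearMap.snd ℝ ℝ (Fin n → ℝ)).comp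
          (ContinuousLinearMap.snd ℝ ℝ (ℝ × (Fin n → ℝ))))) q :=
    fun i => ((ContinuousLinearMap.proj i).comp
      ((ContinuousLinearMap.snd ℝ ℝ (Fin n → ℝ)).comp
        (ContinuousLinearMap.snd ℝ ℝ (ℝ × (Fin n → ℝ))))).hasFDerivAt
  have hdKi : ∀ i, HasFDerivAt (fun p : ℝ × ℝ × (Fin n → ℝ) => dK p.1 i)
      ((ContinuousLinearMap.proj i).comp
        (((1 : ℝ →L[ℝ] ℝ).smulRight (ddK q.1)).comp
          (ContinuousLinearMap.fst ℝ ℝ (ℝ × (Fin n → ℝ))))) q :=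
    fun i => by
      exact (ContinuousLinearMap.proj (R := ℝ) (φ := fun _ : Fin n => ℝ) i).hasFDerivAt.comp q
        (((hdK q.1).hasFDerivAt).comp q (hasFDerivAt_fst))
  have h2 : HasFDerivAt (fun p : ℝ × ℝ × (Fin n → ℝ) => ∑ i, p.2.2 i * dK p.1 i)
      (∑ i : Fin n, (q.2.2 i • _ + dK q.1 i • _)) q :=
    HasFDerivAt.fun_sum (fun i _ => (hx i).mul (hdKi i))
  have h3 : HasFDerivAt (fun p : ℝ × ℝ × (Fin n → ℝ) => K p.1)
      (((1 : ℝ →L[ℝ] ℝ).smulRight (dK q.1)).comp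
        (ContinuousLinearMap.fst ℝ ℝ (ℝ × (Fin n → ℝ)))) q :=
    ((hK q.1).hasFDerivAt).comp q hasFDerivAt_fst
  have h1 : HasFDerivAt (fun _ : ℝ × ℝ × (Fin n → ℝ) => (0:ℝ)) 0 q :=
    hasFDerivAt_const (𝕜 := ℝ) (0:ℝ) q
  have H := HasFDerivAt.prodMk h1 (HasFDerivAt.prodMk h2 h3)
  have he : heisVF K dK = fun p : ℝ × ℝ × (Fin n → ℝ) =>
      ((0:ℝ), ∑ i, p.2.2 i * dK p.1 i, K p.1) := by
    funext p; simp [heisVF, dotProduct]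
  rw [he, H.fderiv]
  simp [hw, dotProduct, mul_comm]

/-- the Lie bracket `[X_J, X_K](q) = DX_K(q)(X_J(q)) − DX_J(q)(X_K(q))` of the
vector fields `X_J(u,v,x) = (0, ⟨x,J'(u)⟩, J(u))` equals `ω(J,K)(u) ∂ᵥ`, i.e.
`(0, ⟨J(u),K'(u)⟩ − ⟨K(u),J'(u)⟩, 0)`. -/
theorem heisenberg_bracket {n : ℕ} (J dJ ddJ K dK ddK : ℝ → (Fin n → ℝ))
    (hJ : ∀ u, HasDerivAt J (dJ u) u)
    (hdJ : ∀ u, HasDerivAt dJ (ddJ u) u)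
    (hK : ∀ u, HasDerivAt K (dK u) u)
    (hdK : ∀ u, HasDerivAt dK (ddK u) u) :
    ∀ q : ℝ × ℝ × (Fin n → ℝ),
      fderiv ℝ (heisVF K dK) q (heisVF J dJ q) - fderiv ℝ (heisVF J dJ) q (heisVF K dK q)
        = ((0 : ℝ), J q.1 ⬝ᵥ dK q.1 - K q.1 ⬝ᵥ dJ q.1, (0 : Fin n → ℝ)) := by
  intro q
  rw [heisVF_fderiv_apply K dK ddK hK hdK q _ rfl,
      heisVF_fderiv_apply J dJ ddJ hJ hdJ q _ rfl]
  simp [heisVF, Prod.ext_iff]
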